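/- Let $E$ be the elliptic curve over $\mathbb{Q}(s)$ defined by $V^2 + (s + 1/s - 2) U V = U(U-1)^2$. Then the point $A = (s, s-1)$ is a point of exact order $8$ on $E$. -/

import Mathlib

noncomputable section

/-- The elliptic curve `V² + (s + 1/s - 2)UV = U(U-1)²` over `ℚ(s)`. -/
def W6 : WeierstrassCurve.Affine (RatFunc ℚ) :=
  { a₁ := RatFunc.X + 1 / RatFunc.X - 2, a₂ := -2, a₃ := 0, a₄ := 1, a₆ := 0 }

open WeierstrassCurve.Affine Polynomial

open Classical

local notation "t" => (RatFunc.X : RatFunc ℚ)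

lemma ht0 : t ≠ 0 := RatFunc.X_ne_zero

lemma ht1 : t ≠ 1 := by
  intro h
  have : (Polynomial.X : ℚ[X]) = 1 :=
    RatFunc.algebraMap_injective ℚ (by simpa [RatFunc.algebraMap_X] using h)
  simpa using congrArg (Polynomial.eval 0) this

lemma htm1 : t ≠ -1 := by
  intro h
  have : (Polynomial.X : ℚ[X]) = -1 :=
    RatFunc.algebraMap_injective ℚ (by simpa [RatFunc.algebraMap_X] using h)
  simpa using congrArg (Polynomial.eval 0) this

lemma ht1' : t - 1 ≠ 0 := sub_ne_zero.mpr ht1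

lemma htp1 : t + 1 ≠ 0 := by
  simpa [eq_neg_iff_add_eq_zero, add_comm] using htm1

lemma hA : W6.Nonsingular t (t - 1) := by
  have h0 := ht0
  rw [nonsingular_iff, equation_iff]
  constructor
  · show (t-1)^2 + (t + 1/t - 2) * t * (t-1) + 0 * (t-1) = t^3 + (-2)*t^2 + 1*t + 0
    field_simp
    ring
  · right
    show t - 1 ≠ -(t-1) - (t + 1/t - 2) * t - 0
    intro h
    apply mul_ne_zero ht1' htp1
    field_simp at h
    linear_combination h

lemma ha1 : t + 1/t - 2 ≠ 0 := by
  intro h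
  apply pow_ne_zero 2 ht1'
  have h0 := ht0
  field_simp at h
  linear_combination h

lemma hB : W6.Nonsingular 1 0 := by
  rw [nonsingular_iff, equation_iff]
  refine ⟨?_, Or.inr ?_⟩
  · show (0:RatFunc ℚ)^2 + (t + 1/t - 2) * 1 * 0 + 0 * 0 = 1^3 + (-2)*1^2 + 1*1 + 0
    ring
  · show (0:RatFunc ℚ) ≠ -0 - (t + 1/t - 2) * 1 - 0
    intro h
    exact ha1 (by linear_combination h)

lemma hC : W6.Nonsingular 0 0 := by
  rw [nonsingular_iff, equation_iff]
  refine ⟨?_, Or.inl ?_⟩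
  · show (0:RatFunc ℚ)^2 + (t + 1/t - 2) * 0 * 0 + 0 * 0 = 0^3 + (-2)*0^2 + 1*0 + 0
    ring
  · show (t + 1/t - 2) * 0 ≠ 3 * 0 ^ 2 + 2 * (-2) * 0 + 1
    norm_num

lemma negY_A : W6.negY t (t - 1) = t - t ^ 2 := by
  have h0 := ht0
  show -(t-1) - (t + 1/t - 2) * t - 0 = t - t ^ 2
  field_simp
  ring

lemma hyA : (t - 1) ≠ W6.negY t (t - 1) := by
  rw [negY_A]
  intro h
  exact mul_ne_zero ht1' htp1 (by linear_combination h)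

lemma negY_B : W6.negY 1 0 = -(t + 1/t - 2) := by
  show -0 - (t + 1/t - 2) * 1 - 0 = _
  ring

lemma hyB : (0 : RatFunc ℚ) ≠ W6.negY 1 0 := by
  rw [negY_B]
  intro h
  exact ha1 (by linear_combination h)

lemma point_some_eq {x₁ x₂ y₁ y₂ : RatFunc ℚ} (h : W6.Nonsingular x₁ y₁)
    (hx : x₁ = x₂) (hy : y₁ = y₂) (h' : W6.Nonsingular x₂ y₂) :
    Point.some _ _ h = Point.some _ _ h' := by subst hx; subst hy; rfl

lemma slope_A : W6.slope t t (t - 1) (t - 1) = 2 - 1 / t := by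
  have h0 := ht0
  rw [slope_of_Y_ne rfl hyA, negY_A]
  show (3 * t ^ 2 + 2 * (-2) * t + 1 - (t + 1/t - 2) * (t - 1)) / ((t - 1) - (t - t ^ 2)) = _
  have hd : (t - 1) - (t - t ^ 2) ≠ 0 := by
    intro h
    exact mul_ne_zero ht1' htp1 (by linear_combination h)
  rw [div_eq_iff hd]
  field_simp
  ring

lemma slope_B : W6.slope 1 1 0 0 = 0 := by
  rw [slope_of_Y_ne rfl hyB]
  show (3 * 1 ^ 2 + 2 * (-2) * 1 + 1 - (t + 1/t - 2) * 0) / _ = 0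
  norm_num

lemma addX_A : W6.addX t t (W6.slope t t (t - 1) (t - 1)) = 1 := by
  have h0 := ht0
  rw [slope_A]
  show (2 - 1/t) ^ 2 + (t + 1/t - 2) * (2 - 1/t) - (-2) - t - t = 1
  field_simp
  ring

lemma addX_B : W6.addX 1 1 (W6.slope 1 1 0 0) = 0 := by
  rw [slope_B]
  show (0:RatFunc ℚ) ^ 2 + (t + 1/t - 2) * 0 - (-2) - 1 - 1 = 0
  ring

lemma e2 : Point.some _ _ hA + Point.some _ _ hA = Point.some _ _ hB := by
  rw [Point.add_of_Y_ne hyA]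
  refine point_some_eq _ addX_A ?_ hB
  show W6.negY _ _ = 0
  show -(W6.slope t t (t-1) (t-1) * (W6.addX t t (W6.slope t t (t-1) (t-1)) - t) + (t-1))
    - (t + 1/t - 2) * W6.addX t t (W6.slope t t (t-1) (t-1)) - 0 = 0
  rw [addX_A, slope_A]
  have h0 := ht0
  field_simp
  ring

lemma e4 : Point.some _ _ hB + Point.some _ _ hB = Point.some _ _ hC := by
  rw [Point.add_of_Y_ne hyB]
  refine point_some_eq _ addX_B ?_ hC
  show W6.negY _ _ = 0
  show -(W6.slope 1 1 0 0 * (W6.addX 1 1 (W6.slope 1 1 0 0) - 1) + 0)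
    - (t + 1/t - 2) * W6.addX 1 1 (W6.slope 1 1 0 0) - 0 = 0
  rw [addX_B, slope_B]
  ring

lemma e8 : Point.some _ _ hC + Point.some _ _ hC = 0 := by
  apply Point.add_self_of_Y_eq
  show (0:RatFunc ℚ) = -0 - (t + 1/t - 2) * 0 - 0
  ring

open Classical in
/-- The point `A = (s, s - 1)` on `V² + (s + 1/s - 2)UV = U(U-1)²` has exact order 8. -/
theorem stmt6 :
    ∃ h : W6.Nonsingular RatFunc.X (RatFunc.X - 1),
      addOrderOf (WeierstrassCurve.Affine.Point.some _ _ h) = 8 := by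
  refine ⟨hA, ?_⟩
  have h4 : (4 : ℕ) • Point.some _ _ hA = Point.some _ _ hC := by
    rw [show (4:ℕ) = 2*2 from rfl, mul_smul, two_nsmul (Point.some _ _ hA), e2, two_nsmul, e4]
  have h8 : (8 : ℕ) • Point.some _ _ hA = 0 := by
    rw [show (8:ℕ) = 2*4 from rfl, mul_smul, h4, two_nsmul, e8]
  have := addOrderOf_eq_prime_pow (p := 2) (n := 2) (x := Point.some _ _ hA)
    (by rw [show (2:ℕ)^2 = 4 from rfl, h4]; exact Point.some_ne_zero hC)
    (by rw [show (2:ℕ)^(2+1) = 8 from rfl]; exact h8)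
  simpa using this
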